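/- Let G be a finite subgroup of GL(d,ℂ), let p₁,…,p_m be generators of the ℂ-algebra of G-invariant polynomials on ℂ^d, and p = (p₁,…,p_m) : ℂ^d → ℂ^m. Then the image p(ℂ^d) is Zariski closed: p(ℂ^d) = {y ∈ ℂ^m : P(y) = 0 for every polynomial P ∈ ℂ[y₁,…,y_m] such that P ∘ p is identically zero on ℂ^d}. -/

import Mathlib

open Matrix MvPolynomial

noncomputable section

/-- Action of an invertible complex matrix on a vector in `ℂ^d`. -/
def actCC {d : ℕ} (g : GL (Fin d) ℂ) (v : Fin d → ℂ) : Fin d → ℂ :=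
  (g : Matrix (Fin d) (Fin d) ℂ).mulVec v

/-- Orbit of a vector under a subgroup of `GL (Fin d) ℂ`. -/
def orbitCC {d : ℕ} (G : Subgroup (GL (Fin d) ℂ)) (v : Fin d → ℂ) : Set (Fin d → ℂ) :=
  {x | ∃ g ∈ G, actCC g v = x}

/-- `P` is a `G`-invariant complex polynomial. -/
def IsInvC {d : ℕ} (G : Subgroup (GL (Fin d) ℂ)) (P : MvPolynomial (Fin d) ℂ) : Prop :=
  ∀ g ∈ G, ∀ v : Fin d → ℂ, eval (actCC g v) P = eval v P

/-- The polynomial map `ℂ^d → ℂ^m` given by a family of complex polynomials. -/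
def evalMapC {d m : ℕ} (p : Fin m → MvPolynomial (Fin d) ℂ) (v : Fin d → ℂ) : Fin m → ℂ :=
  fun i => eval v (p i)

/-- `G` contains no pseudoreflections: every nonidentity `g` has `rank (g - 1) ≥ 2`. -/
def NoPseudoreflections {d : ℕ} (G : Subgroup (GL (Fin d) ℂ)) : Prop :=
  ∀ g ∈ G, g ≠ 1 → 2 ≤ ((g : Matrix (Fin d) (Fin d) ℂ) - 1).rank

/-- the image of the orbit map of a finite complex linear group
is Zariski closed. -/

private lemma eval_aevalC {σ τ : Type*} (v : τ → ℂ) (f : σ → MvPolynomial τ ℂ)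
    (Q : MvPolynomial σ ℂ) :
    eval v (aeval f Q) = eval (fun i => eval v (f i)) Q := by
  rw [aeval_eq_bind₁]
  exact eval₂Hom_bind₁ (RingHom.id ℂ) v f Q

private def subAct {d : ℕ} (g : GL (Fin d) ℂ) :
    MvPolynomial (Fin d) ℂ →ₐ[ℂ] MvPolynomial (Fin d) ℂ :=
  aeval (fun i => ∑ k, C ((g : Matrix (Fin d) (Fin d) ℂ) i k) * X k)

private def linC {d : ℕ} (g : GL (Fin d) ℂ) (j : Fin d) : MvPolynomial (Fin d) ℂ :=
  ∑ k, C ((g : Matrix (Fin d) (Fin d) ℂ) j k) * X k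

private lemma eval_subAct {d : ℕ} (g : GL (Fin d) ℂ) (v : Fin d → ℂ)
    (P : MvPolynomial (Fin d) ℂ) :
    eval v (subAct g P) = eval (actCC g v) P := by
  rw [subAct, eval_aevalC]
  have : (fun i => eval v (∑ k, C ((g : Matrix (Fin d) (Fin d) ℂ) i k) * X k)) = actCC g v := by
    funext i
    simp [actCC, Matrix.mulVec, dotProduct]
  rw [this]

private lemma subAct_linC {d : ℕ} (g h : GL (Fin d) ℂ) (j : Fin d) :
    subAct h (linC g j) = linC (g * h) j := by
  have hk : ∀ k, subAct h (C ((g : Matrix (Fin d) (Fin d) ℂ) j k) * X k)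
      = ∑ l, C ((g : Matrix (Fin d) (Fin d) ℂ) j k * (h : Matrix (Fin d) (Fin d) ℂ) k l) * X l := by
    intro k
    have h1 : subAct h (C ((g : Matrix (Fin d) (Fin d) ℂ) j k) * X k)
        = C ((g : Matrix (Fin d) (Fin d) ℂ) j k) * ∑ l, C ((h : Matrix (Fin d) (Fin d) ℂ) k l) * X l := by
      simp [subAct, algebraMap_eq]
    rw [h1, Finset.mul_sum]
    refine Finset.sum_congr rfl fun l _ => ?_
    rw [← mul_assoc, ← C_mul]
  rw [linC, map_sum]
  simp only [hk]
  rw [Finset.sum_comm]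
  refine Finset.sum_congr rfl fun l _ => ?_
  rw [← Finset.sum_mul, ← map_sum]
  have h2 : ((g * h : GL (Fin d) ℂ) : Matrix (Fin d) (Fin d) ℂ) j l
      = ∑ k, (g : Matrix (Fin d) (Fin d) ℂ) j k * (h : Matrix (Fin d) (Fin d) ℂ) k l := by
    simp [Units.val_mul, Matrix.mul_apply]
  rw [h2]

private lemma linC_one {d : ℕ} (j : Fin d) : linC (1 : GL (Fin d) ℂ) j = X j := by
  simp [linC, Matrix.one_apply]

set_option maxHeartbeats 1000000 in
theorem stmt_16 (d m : ℕ) (G : Subgroup (GL (Fin d) ℂ)) [Finite G]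
    (p : Fin m → MvPolynomial (Fin d) ℂ)
    (hpgen : ∀ P, IsInvC G P ↔ P ∈ Algebra.adjoin ℂ (Set.range p)) :
    Set.range (evalMapC p) =
      {y : Fin m → ℂ | ∀ P : MvPolynomial (Fin m) ℂ,
        (∀ v : Fin d → ℂ, eval (evalMapC p v) P = 0) → eval y P = 0} := by
  classical
  haveI : Fintype G := Fintype.ofFinite G
  ext y
  simp only [Set.mem_range, Set.mem_setOf_eq]
  constructor
  · rintro ⟨v, rfl⟩ P hP
    exact hP v
  intro hy
  -- the orbit polynomials
  set F : Fin d → Polynomial (MvPolynomial (Fin d) ℂ) := fun j => ∏ g : G, (Polynomial.X - Polynomial.C (linC ↑g j))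
    with hF
  -- the comparison hom
  set φ : MvPolynomial (Fin m) ℂ →ₐ[ℂ] MvPolynomial (Fin d) ℂ := aeval p with hφ
  have heval : ∀ (v : Fin d → ℂ) (Q : MvPolynomial (Fin m) ℂ), eval v (φ Q) = eval (evalMapC p v) Q := by
    intro v Q
    rw [hφ, eval_aevalC]
    rfl
  -- invariance of coefficients of F j
  have hinv : ∀ j n, IsInvC G ((F j).coeff n) := by
    intro j n h hh v
    rw [← eval_subAct]
    congr 1
    have : (subAct h) ((F j).coeff n) = ((F j).map (subAct h).toRingHom).coeff n := by
      rw [Polynomial.coeff_map]; rfl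
    rw [this]
    congr 1
    have key : ∀ g : G, (Polynomial.X - Polynomial.C (linC (↑g) j)).map (subAct h).toRingHom
        = Polynomial.X - Polynomial.C (linC ↑(g * ⟨h, hh⟩) j) := by
      intro g
      rw [Polynomial.map_sub, Polynomial.map_X, Polynomial.map_C]
      have : (subAct h).toRingHom (linC (↑g) j) = linC ((↑g : GL (Fin d) ℂ) * h) j :=
        subAct_linC _ _ _
      rw [this]; rfl
    calc (F j).map (subAct h).toRingHom
        = ∏ g : G, (Polynomial.X - Polynomial.C (linC ↑(g * ⟨h, hh⟩) j)) := by
          rw [hF, Polynomial.map_prod]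
          exact Finset.prod_congr rfl fun g _ => key g
      _ = F j := Fintype.prod_equiv (Equiv.mulRight (⟨h, hh⟩ : G)) _ _ (fun g => rfl)
  -- coefficients lie in the range of φ
  have hrange : ∀ j n, (F j).coeff n ∈ φ.range := by
    intro j n
    rw [hφ, ← Algebra.adjoin_range_eq_range_aeval]
    exact (hpgen _).1 (hinv j n)
  -- algebra structure
  letI : Algebra (MvPolynomial (Fin m) ℂ) (MvPolynomial (Fin d) ℂ) := φ.toRingHom.toAlgebra
  haveI : IsScalarTower ℂ (MvPolynomial (Fin m) ℂ) (MvPolynomial (Fin d) ℂ) := IsScalarTower.of_algebraMap_eq fun c => (φ.commutes c).symm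
  have halg : algebraMap (MvPolynomial (Fin m) ℂ) (MvPolynomial (Fin d) ℂ) = φ.toRingHom := rfl
  -- integrality
  have hX : ∀ j, IsIntegral (MvPolynomial (Fin m) ℂ) (X j : MvPolynomial (Fin d) ℂ) := by
    intro j
    have hl : F j ∈ Polynomial.lifts (algebraMap (MvPolynomial (Fin m) ℂ) (MvPolynomial (Fin d) ℂ)) := by
      rw [Polynomial.lifts_iff_coeff_lifts]
      intro n
      obtain ⟨Q, hQ⟩ := hrange j n
      exact ⟨Q, hQ⟩
    have hm : (F j).Monic :=
      Polynomial.monic_prod_of_monic _ _ fun g _ => Polynomial.monic_X_sub_C _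
    obtain ⟨q, hq, -, hqm⟩ := Polynomial.lifts_and_degree_eq_and_monic hl hm
    refine ⟨q, hqm, ?_⟩
    rw [Polynomial.eval₂_eq_eval_map, hq, hF]
    rw [Polynomial.eval_prod]
    apply Finset.prod_eq_zero (Finset.mem_univ (1 : G))
    simp only [Polynomial.eval_sub, Polynomial.eval_X, Polynomial.eval_C]
    have : linC ((1 : G) : GL (Fin d) ℂ) j = X j := by
      rw [show ((1 : G) : GL (Fin d) ℂ) = 1 from rfl]
      exact linC_one j
    rw [this, sub_self]
  haveI : Algebra.IsIntegral (MvPolynomial (Fin m) ℂ) (MvPolynomial (Fin d) ℂ) := by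
    constructor
    intro a
    have htop : (⊤ : Subalgebra ℂ (MvPolynomial (Fin d) ℂ)) ≤ (integralClosure (MvPolynomial (Fin m) ℂ) (MvPolynomial (Fin d) ℂ)).restrictScalars ℂ := by
      rw [← MvPolynomial.adjoin_range_X]
      apply Algebra.adjoin_le
      rintro _ ⟨j, rfl⟩
      exact hX j
    exact htop (by trivial : a ∈ (⊤ : Subalgebra ℂ (MvPolynomial (Fin d) ℂ)))
  -- the maximal ideal of B given by y
  have hsurj : Function.Surjective (eval y : MvPolynomial (Fin m) ℂ →+* ℂ) := fun c => ⟨C c, eval_C _⟩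
  haveI hJmax : (RingHom.ker (eval y : MvPolynomial (Fin m) ℂ →+* ℂ)).IsMaximal :=
    RingHom.ker_isMaximal_of_surjective _ hsurj
  have hker : RingHom.ker (algebraMap (MvPolynomial (Fin m) ℂ) (MvPolynomial (Fin d) ℂ)) ≤ RingHom.ker (eval y : MvPolynomial (Fin m) ℂ →+* ℂ) := by
    intro Q hQ
    rw [RingHom.mem_ker] at hQ ⊢
    refine hy Q fun v => ?_
    rw [← heval, show φ Q = 0 from hQ, map_zero]
  obtain ⟨M, hM, hMc⟩ :=
    Ideal.exists_ideal_over_maximal_of_isIntegral (RingHom.ker (eval y : MvPolynomial (Fin m) ℂ →+* ℂ)) hker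
  obtain ⟨v, hv⟩ := MvPolynomial.isMaximal_iff_eq_vanishingIdeal_singleton.mp hM
  refine ⟨v, ?_⟩
  funext i
  have hQ : (X i - C (y i) : MvPolynomial (Fin m) ℂ) ∈ RingHom.ker (eval y : MvPolynomial (Fin m) ℂ →+* ℂ) := by
    rw [RingHom.mem_ker, map_sub, eval_X, eval_C, sub_self]
  have hmem : φ (X i - C (y i)) ∈ M := by
    rw [← hMc] at hQ
    exact hQ
  rw [hv] at hmem
  have := (MvPolynomial.mem_vanishingIdeal_iff.mp hmem) v rfl
  rw [map_sub] at this
  have hC : φ (C (y i)) = MvPolynomial.C (y i) := by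
    rw [hφ, aeval_C, algebraMap_eq]
  rw [hC, hφ, aeval_X, map_sub, aeval_C] at this
  exact sub_eq_zero.mp this
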